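/- Let C be a monotone normalized subadditive cost function and let ALG maximize Σ_i v_i(S_i) − P_C(S) over allocations S. Then the social cost π(S) = C(S) + Σ_i [v_i(M_i) − v_i(S_i)] satisfies π(ALG) ≤ 2·H_n · π(OPT) for every allocation OPT. -/

import Mathlib

open Finset

variable {α : Type*}

noncomputable def potential [DecidableEq α] (n : ℕ)
    (C : Finset α → ℝ) (S : Fin n → Finset α) : ℝ :=
  ∑ I ∈ (univ : Finset (Fin n)).powerset.filter (· ≠ ∅),
    C (I.biUnion S) / ((I.card : ℝ) * (n.choose I.card : ℝ))

namespace Stmt12Aux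

noncomputable def Tsum {n : ℕ} (f : Finset (Fin n) → ℝ) (k : ℕ) : ℝ :=
  ∑ I ∈ powersetCard k (univ : Finset (Fin n)), f I

noncomputable def aa {n : ℕ} (f : Finset (Fin n) → ℝ) (k : ℕ) : ℝ :=
  Tsum f k / (n.choose k : ℝ)

lemma count_sup {n j m : ℕ} (hjm : j ≤ m) (I : Finset (Fin n)) (hI : I.card = j) :
    ((powersetCard m (univ : Finset (Fin n))).filter (fun K => I ⊆ K)).card
      = (n - j).choose (m - j) := by
  have hc : ((univ : Finset (Fin n)) \ I).card = n - j := by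
    rw [card_sdiff_of_subset (subset_univ I), hI, card_univ, Fintype.card_fin]
  rw [← hc, ← Finset.card_powersetCard (m - j) (univ \ I)]
  apply Finset.card_bij' (fun K _ => K \ I) (fun J _ => J ∪ I)
  · intro K hK
    simp only [mem_filter, mem_powersetCard] at hK
    simp only [mem_powersetCard]
    exact ⟨sdiff_subset_sdiff hK.1.1 le_rfl,
      by rw [card_sdiff_of_subset hK.2, hK.1.2, hI]⟩
  · intro J hJ
    simp only [mem_powersetCard] at hJ
    have hdisj : Disjoint J I := disjoint_of_subset_left hJ.1 sdiff_disjoint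
    simp only [mem_filter, mem_powersetCard]
    refine ⟨⟨subset_univ _, ?_⟩, subset_union_right⟩
    rw [card_union_of_disjoint hdisj, hJ.2, hI]
    omega
  · intro K hK
    simp only [mem_filter, mem_powersetCard] at hK
    exact sdiff_union_of_subset hK.2
  · intro J hJ
    simp only [mem_powersetCard] at hJ
    have hdisj : Disjoint J I := disjoint_of_subset_left hJ.1 sdiff_disjoint
    rw [union_sdiff_right, sdiff_eq_self_of_disjoint hdisj]

lemma exch {n : ℕ} (f : Finset (Fin n) → ℝ) {j m : ℕ} (hjm : j ≤ m) :
    ∑ K ∈ powersetCard m (univ : Finset (Fin n)), ∑ I ∈ powersetCard j K, f I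
      = ((n - j).choose (m - j) : ℝ) * Tsum f j := by
  rw [Finset.sum_comm' (t' := powersetCard j (univ : Finset (Fin n)))
    (s' := fun I => (powersetCard m (univ : Finset (Fin n))).filter (fun K => I ⊆ K))]
  · rw [Tsum, Finset.mul_sum]
    refine Finset.sum_congr rfl fun I hI => ?_
    rw [Finset.sum_const, count_sup hjm I (mem_powersetCard.1 hI).2]
    simp [nsmul_eq_mul]
  · intro K I
    simp only [mem_powersetCard, mem_filter]
    constructor
    · rintro ⟨⟨hKu, hKc⟩, hIK, hIc⟩
      exact ⟨⟨⟨hKu, hKc⟩, hIK⟩, hIK.trans hKu, hIc⟩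
    · rintro ⟨⟨⟨hKu, hKc⟩, hIK⟩, _, hIc⟩
      exact ⟨⟨hKu, hKc⟩, hIK, hIc⟩

variable {n : ℕ} {f : Finset (Fin n) → ℝ}

lemma tsum_mono_step (hmono : ∀ I J : Finset (Fin n), I ⊆ J → f I ≤ f J)
    {k : ℕ} (hk : k < n) :
    ((n - k : ℕ) : ℝ) * Tsum f k ≤ ((k + 1 : ℕ) : ℝ) * Tsum f (k + 1) := by
  have h1 := exch f (j := k) (m := k + 1) (Nat.le_succ k)
  rw [Nat.add_sub_cancel_left, Nat.choose_one_right] at h1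
  rw [← h1, Tsum, Finset.mul_sum]
  apply Finset.sum_le_sum
  intro K hK
  have hKc : K.card = k + 1 := (mem_powersetCard.1 hK).2
  have : ∑ I ∈ powersetCard k K, f I ≤ ∑ I ∈ powersetCard k K, f K := by
    apply Finset.sum_le_sum
    intro I hI
    exact hmono _ _ (mem_powersetCard.1 hI).1
  refine this.trans_eq ?_
  rw [Finset.sum_const, Finset.card_powersetCard, hKc, Nat.choose_succ_self_right,
    nsmul_eq_mul]

lemma compl_reindex (j k : ℕ) (K : Finset (Fin n)) (hK : K.card = j + k) :
    ∑ I ∈ powersetCard j K, f (K \ I) = ∑ J ∈ powersetCard k K, f J := by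
  apply Finset.sum_nbij' (fun I => K \ I) (fun J => K \ J)
  · intro I hI
    simp only [mem_powersetCard] at hI ⊢
    exact ⟨sdiff_subset, by rw [card_sdiff_of_subset hI.1, hK, hI.2]; omega⟩
  · intro J hJ
    simp only [mem_powersetCard] at hJ ⊢
    exact ⟨sdiff_subset, by rw [card_sdiff_of_subset hJ.1, hK, hJ.2]; omega⟩
  · intro I hI
    exact Finset.sdiff_sdiff_eq_self (mem_powersetCard.1 hI).1
  · intro J hJ
    exact Finset.sdiff_sdiff_eq_self (mem_powersetCard.1 hJ).1
  · intro I hI; rfl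

lemma tsum_subadd_step (hsub : ∀ I J : Finset (Fin n), f (I ∪ J) ≤ f I + f J)
    {j k : ℕ} (hjk : j + k ≤ n) :
    (((j + k).choose j : ℕ) : ℝ) * Tsum f (j + k)
      ≤ ((n - j).choose k : ℝ) * Tsum f j + ((n - k).choose j : ℝ) * Tsum f k := by
  have key : (((j + k).choose j : ℕ) : ℝ) * Tsum f (j + k)
      ≤ ∑ K ∈ powersetCard (j + k) (univ : Finset (Fin n)),
          ∑ I ∈ powersetCard j K, (f I + f (K \ I)) := by
    rw [Tsum, Finset.mul_sum]
    apply Finset.sum_le_sum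
    intro K hK
    have hKc : K.card = j + k := (mem_powersetCard.1 hK).2
    have hcard : (powersetCard j K).card = (j + k).choose j := by
      rw [Finset.card_powersetCard, hKc]
    calc ((j + k).choose j : ℝ) * f K = ∑ _I ∈ powersetCard j K, f K := by
          rw [Finset.sum_const, hcard, nsmul_eq_mul]
      _ ≤ ∑ I ∈ powersetCard j K, (f I + f (K \ I)) := by
          apply Finset.sum_le_sum
          intro I hI
          have hIK : I ⊆ K := (mem_powersetCard.1 hI).1
          calc f K = f (I ∪ K \ I) := by rw [Finset.union_sdiff_of_subset hIK]
            _ ≤ f I + f (K \ I) := hsub _ _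
  refine key.trans ?_
  have split : ∑ K ∈ powersetCard (j + k) (univ : Finset (Fin n)),
      ∑ I ∈ powersetCard j K, (f I + f (K \ I))
      = (∑ K ∈ powersetCard (j + k) (univ : Finset (Fin n)),
          ∑ I ∈ powersetCard j K, f I)
        + ∑ K ∈ powersetCard (j + k) (univ : Finset (Fin n)),
          ∑ J ∈ powersetCard k K, f J := by
    rw [← Finset.sum_add_distrib]
    refine Finset.sum_congr rfl fun K hK => ?_
    rw [Finset.sum_add_distrib, ← compl_reindex j k K (mem_powersetCard.1 hK).2]
  rw [split, exch f (Nat.le_add_right j k),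
    exch f (Nat.le_add_left k j), Nat.add_sub_cancel_left, Nat.add_sub_cancel]

lemma aa_nonneg (hnn : ∀ I, 0 ≤ f I) (k : ℕ) : 0 ≤ aa f k := by
  apply div_nonneg _ (by positivity)
  exact Finset.sum_nonneg fun I _ => hnn I

lemma aa_mono_step (hmono : ∀ I J : Finset (Fin n), I ⊆ J → f I ≤ f J)
    {k : ℕ} (hk : k < n) : aa f k ≤ aa f (k + 1) := by
  have hp1 : (0 : ℝ) < (n.choose k : ℝ) := by
    exact_mod_cast Nat.choose_pos hk.le
  have hp2 : (0 : ℝ) < (n.choose (k + 1) : ℝ) := by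
    exact_mod_cast Nat.choose_pos hk
  rw [aa, aa, div_le_div_iff₀ hp1 hp2]
  have h1 := tsum_mono_step hmono hk
  have h2 := mul_le_mul_of_nonneg_left h1 hp1.le
  have h3 : (0 : ℝ) < ((k + 1 : ℕ) : ℝ) := by positivity
  apply le_of_mul_le_mul_right _ h3
  have hid : ((n.choose (k + 1) : ℕ) : ℝ) * ((k + 1 : ℕ) : ℝ)
      = ((n.choose k : ℕ) : ℝ) * ((n - k : ℕ) : ℝ) := by
    exact_mod_cast congrArg (Nat.cast (R := ℝ)) (Nat.choose_succ_right_eq n k)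
  calc Tsum f k * (n.choose (k + 1) : ℝ) * ((k + 1 : ℕ) : ℝ)
      = (n.choose (k + 1) : ℝ) * ((k + 1 : ℕ) : ℝ) * Tsum f k := by ring
    _ = (n.choose k : ℝ) * (((n - k : ℕ) : ℝ) * Tsum f k) := by rw [hid]; ring
    _ ≤ (n.choose k : ℝ) * (((k + 1 : ℕ) : ℝ) * Tsum f (k + 1)) := h2
    _ = Tsum f (k + 1) * (n.choose k : ℝ) * ((k + 1 : ℕ) : ℝ) := by ring

lemma aa_mono (hmono : ∀ I J : Finset (Fin n), I ⊆ J → f I ≤ f J)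
    {p q : ℕ} (hpq : p ≤ q) (hq : q ≤ n) : aa f p ≤ aa f q := by
  induction q, hpq using Nat.le_induction with
  | base => exact le_refl _
  | succ q hpq ih =>
      exact (ih (by omega)).trans (aa_mono_step hmono (by omega))

lemma aa_subadd (hsub : ∀ I J : Finset (Fin n), f (I ∪ J) ≤ f I + f J)
    {j k : ℕ} (hjk : j + k ≤ n) : aa f (j + k) ≤ aa f j + aa f k := by
  have hA : (0 : ℝ) < (n.choose (j + k) : ℝ) := by exact_mod_cast Nat.choose_pos hjk
  have hB : (0 : ℝ) < ((j + k).choose j : ℝ) := by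
    exact_mod_cast Nat.choose_pos (Nat.le_add_right j k)
  have hCj : (0 : ℝ) < (n.choose j : ℝ) := by
    exact_mod_cast Nat.choose_pos (le_trans (Nat.le_add_right j k) hjk)
  have hCk : (0 : ℝ) < (n.choose k : ℝ) := by
    exact_mod_cast Nat.choose_pos (le_trans (Nat.le_add_left k j) hjk)
  have hDj : (0 : ℝ) < ((n - j).choose k : ℝ) := by
    have : k ≤ n - j := by omega
    exact_mod_cast Nat.choose_pos this
  have hDk : (0 : ℝ) < ((n - k).choose j : ℝ) := by
    have : j ≤ n - k := by omega
    exact_mod_cast Nat.choose_pos this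
  have id1 : (n.choose (j + k) : ℝ) * ((j + k).choose j : ℝ)
      = (n.choose j : ℝ) * ((n - j).choose k : ℝ) := by
    have := Nat.choose_mul (n := n) (k := j + k) (s := j) (Nat.le_add_right j k)
    rw [Nat.add_sub_cancel_left] at this
    exact_mod_cast congrArg (Nat.cast (R := ℝ)) this
  have id2 : (n.choose (j + k) : ℝ) * ((j + k).choose j : ℝ)
      = (n.choose k : ℝ) * ((n - k).choose j : ℝ) := by
    have hsymm : (j + k).choose j = (j + k).choose k := by
      rw [← Nat.choose_symm (Nat.le_add_right j k), Nat.add_sub_cancel_left]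
    have := Nat.choose_mul (n := n) (k := j + k) (s := k) (Nat.le_add_left k j)
    rw [Nat.add_sub_cancel] at this
    rw [hsymm]
    exact_mod_cast congrArg (Nat.cast (R := ℝ)) this
  have hstep := tsum_subadd_step hsub hjk
  have e0 : aa f (j + k)
      = (((j + k).choose j : ℝ) * Tsum f (j + k))
        / ((n.choose (j + k) : ℝ) * ((j + k).choose j : ℝ)) := by
    rw [aa, mul_comm ((n.choose (j + k) : ℝ)) _, mul_div_mul_left _ _ hB.ne']
  have e1 : aa f j
      = (((n - j).choose k : ℝ) * Tsum f j)
        / ((n.choose (j + k) : ℝ) * ((j + k).choose j : ℝ)) := by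
    rw [aa, id1, mul_comm ((n.choose j : ℝ)) _, mul_div_mul_left _ _ hDj.ne']
  have e2 : aa f k
      = (((n - k).choose j : ℝ) * Tsum f k)
        / ((n.choose (j + k) : ℝ) * ((j + k).choose j : ℝ)) := by
    rw [aa, id2, mul_comm ((n.choose k : ℝ)) _, mul_div_mul_left _ _ hDk.ne']
  rw [e0, e1, e2, ← add_div]
  exact div_le_div_of_nonneg_right hstep (by positivity) |>.trans_eq rfl

end Stmt12Aux
namespace Stmt12Aux
variable {n : ℕ} {f : Finset (Fin n) → ℝ}

lemma aa_chain (hmono : ∀ I J : Finset (Fin n), I ⊆ J → f I ≤ f J)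
    (hsub : ∀ I J : Finset (Fin n), f (I ∪ J) ≤ f I + f J)
    (hnn : ∀ I, 0 ≤ f I)
    {k : ℕ} (hk1 : 1 ≤ k) (hkn : k ≤ n) :
    ∀ m, m ≤ n → aa f m ≤ (((m / k : ℕ) : ℝ) + 1) * aa f k := by
  intro m
  induction m using Nat.strong_induction_on with
  | _ m ih =>
    intro hm
    by_cases hmk : m ≤ k
    · have h1 : aa f m ≤ aa f k := aa_mono hmono hmk hkn
      have h2 : (0 : ℝ) ≤ aa f k := aa_nonneg hnn k
      nlinarith [(Nat.cast_nonneg (m / k) : (0:ℝ) ≤ ((m / k : ℕ) : ℝ))]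
    · push_neg at hmk
      have hk_le : k ≤ m := hmk.le
      have hsplit : aa f m ≤ aa f (m - k) + aa f k := by
        have := aa_subadd hsub (j := m - k) (k := k) (by omega)
        rwa [Nat.sub_add_cancel hk_le] at this
      have ihmk := ih (m - k) (by omega) (by omega)
      have hdiv : m / k = (m - k) / k + 1 := Nat.div_eq_sub_div (by omega) hk_le
      have h2 : (0 : ℝ) ≤ aa f k := aa_nonneg hnn k
      have hcast : ((m / k : ℕ) : ℝ) = (((m - k) / k : ℕ) : ℝ) + 1 := by
        rw [hdiv]; push_cast; ring
      rw [hcast]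
      nlinarith [ihmk, hsplit]

lemma aa_low (hmono : ∀ I J : Finset (Fin n), I ⊆ J → f I ≤ f J)
    (hsub : ∀ I J : Finset (Fin n), f (I ∪ J) ≤ f I + f J)
    (hnn : ∀ I, 0 ≤ f I)
    {k : ℕ} (hk1 : 1 ≤ k) (hkn : k ≤ n) :
    aa f n / (2 * n) ≤ aa f k / k := by
  have hn1 : 1 ≤ n := le_trans hk1 hkn
  have hchain := aa_chain hmono hsub hnn hk1 hkn n le_rfl
  have hnatid : (n / k + 1) * k ≤ 2 * n := by
    have h1 : n / k * k ≤ n := Nat.div_mul_le_self n k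
    calc (n / k + 1) * k = n / k * k + k := by ring
      _ ≤ n + n := by omega
      _ = 2 * n := by ring
  have hkpos : (0 : ℝ) < (k : ℝ) := by exact_mod_cast hk1
  have hnpos : (0 : ℝ) < 2 * (n : ℝ) := by positivity
  rw [div_le_div_iff₀ hnpos hkpos]
  have h2 : (0 : ℝ) ≤ aa f k := aa_nonneg hnn k
  have hcast : (((n / k : ℕ) : ℝ) + 1) * (k : ℝ) ≤ 2 * (n : ℝ) := by
    exact_mod_cast hnatid
  calc aa f n * (k : ℝ) ≤ ((((n / k : ℕ) : ℝ) + 1) * aa f k) * (k : ℝ) :=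
        mul_le_mul_of_nonneg_right hchain hkpos.le
    _ = ((((n / k : ℕ) : ℝ) + 1) * (k : ℝ)) * aa f k := by ring
    _ ≤ (2 * (n : ℝ)) * aa f k := mul_le_mul_of_nonneg_right hcast h2
    _ = aa f k * (2 * (n : ℝ)) := by ring

lemma pot_eq (f : Finset (Fin n) → ℝ) (hf0 : f ∅ = 0) :
    ∑ I ∈ (Finset.univ : Finset (Fin n)).powerset.filter (· ≠ ∅),
        f I / ((I.card : ℝ) * (n.choose I.card : ℝ))
      = ∑ i ∈ Finset.range n, aa f (i + 1) / ((i : ℝ) + 1) := by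
  open Finset in
  set g : Finset (Fin n) → ℝ := fun I => f I / ((I.card : ℝ) * (n.choose I.card : ℝ))
    with hg
  have h1 : ∑ I ∈ (univ : Finset (Fin n)).powerset.filter (· ≠ ∅), g I
      = ∑ I ∈ (univ : Finset (Fin n)).powerset, g I := by
    apply Finset.sum_filter_of_ne
    intro I _ hne
    intro hI
    apply hne
    rw [hg]; simp only; rw [hI, hf0, zero_div]
  have hmaps : ∀ I ∈ (univ : Finset (Fin n)).powerset, I.card ∈ Finset.range (n + 1) := by
    intro I hI
    rw [Finset.mem_range, Nat.lt_succ_iff]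
    calc I.card ≤ (univ : Finset (Fin n)).card := card_le_card (mem_powerset.1 hI)
      _ = n := by rw [card_univ, Fintype.card_fin]
  have h2 : ∑ I ∈ (univ : Finset (Fin n)).powerset, g I
      = ∑ m ∈ Finset.range (n + 1),
          ∑ I ∈ (univ : Finset (Fin n)).powerset.filter (fun I => I.card = m), g I :=
    (Finset.sum_fiberwise_of_maps_to hmaps g).symm
  have h3 : ∀ m ∈ Finset.range (n + 1),
      ∑ I ∈ (univ : Finset (Fin n)).powerset.filter (fun I => I.card = m), g I
        = aa f m / (m : ℝ) := by
    intro m _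
    rw [← Finset.powersetCard_eq_filter]
    have : ∀ I ∈ powersetCard m (univ : Finset (Fin n)),
        g I = f I / ((m : ℝ) * (n.choose m : ℝ)) := by
      intro I hI
      rw [hg]; simp only; rw [(mem_powersetCard.1 hI).2]
    rw [Finset.sum_congr rfl this, ← Finset.sum_div]
    rw [aa, Tsum, div_div, mul_comm ((n.choose m : ℝ)) ((m : ℝ))]
  rw [h1, h2, Finset.sum_congr rfl h3, Finset.sum_range_succ']
  simp only [Nat.cast_zero, div_zero, add_zero, Nat.cast_add, Nat.cast_one]

lemma aa_top (f : Finset (Fin n) → ℝ) : aa f n = f (Finset.univ : Finset (Fin n)) := by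
  rw [aa, Tsum]
  have : powersetCard n (Finset.univ : Finset (Fin n)) = {Finset.univ} := by
    have h := Finset.powersetCard_self (Finset.univ : Finset (Fin n))
    rwa [Finset.card_univ, Fintype.card_fin] at h
  rw [this, Finset.sum_singleton, Nat.choose_self, Nat.cast_one, div_one]

end Stmt12Aux
namespace Stmt12Aux
variable {n : ℕ} {f : Finset (Fin n) → ℝ}

lemma pot_lower (hmono : ∀ I J : Finset (Fin n), I ⊆ J → f I ≤ f J)
    (hsub : ∀ I J : Finset (Fin n), f (I ∪ J) ≤ f I + f J)
    (hnn : ∀ I, 0 ≤ f I) (hn : 1 ≤ n) :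
    f (Finset.univ : Finset (Fin n))
      ≤ 2 * ∑ i ∈ Finset.range n, aa f (i + 1) / ((i : ℝ) + 1) := by
  have key : ∀ i ∈ Finset.range n, aa f n / (2 * (n : ℝ)) ≤ aa f (i + 1) / ((i : ℝ) + 1) := by
    intro i hi
    have hi' : i + 1 ≤ n := Finset.mem_range.1 hi
    have h := aa_low hmono hsub hnn (k := i + 1) (by omega) hi'
    rwa [Nat.cast_add, Nat.cast_one] at h
  have hsum := Finset.sum_le_sum key
  rw [Finset.sum_const, Finset.card_range, nsmul_eq_mul] at hsum
  have hfa : aa f n = f (Finset.univ : Finset (Fin n)) := aa_top f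
  have hnpos : (0 : ℝ) < (n : ℝ) := by exact_mod_cast hn
  have heq : (n : ℝ) * (aa f n / (2 * (n : ℝ)))
      = f (Finset.univ : Finset (Fin n)) / 2 := by
    rw [hfa]; field_simp
  linarith [hsum, heq]

lemma pot_upper (hmono : ∀ I J : Finset (Fin n), I ⊆ J → f I ≤ f J) :
    ∑ i ∈ Finset.range n, aa f (i + 1) / ((i : ℝ) + 1)
      ≤ (∑ k ∈ Finset.range n, (1 : ℝ) / ((k : ℝ) + 1))
          * f (Finset.univ : Finset (Fin n)) := by
  rw [Finset.sum_mul]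
  apply Finset.sum_le_sum
  intro i hi
  have hi' : i + 1 ≤ n := Finset.mem_range.1 hi
  have h1 : aa f (i + 1) ≤ aa f n := aa_mono hmono hi' le_rfl
  rw [aa_top f] at h1
  have hpos : (0 : ℝ) < (i : ℝ) + 1 := by positivity
  calc aa f (i + 1) / ((i : ℝ) + 1)
      ≤ f (Finset.univ : Finset (Fin n)) / ((i : ℝ) + 1) :=
        div_le_div_of_nonneg_right h1 hpos.le |>.trans_eq rfl
    _ = 1 / ((i : ℝ) + 1) * f (Finset.univ : Finset (Fin n)) := by ring

end Stmt12Aux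

open Stmt12Aux in
theorem stmt12 [DecidableEq α] (n : ℕ) (M : Fin n → Finset α)
    (hM : ∀ i j : Fin n, i ≠ j → Disjoint (M i) (M j))
    (C : Finset α → ℝ) (hC0 : C ∅ = 0) (hCnn : ∀ S, 0 ≤ C S)
    (hCmono : ∀ S T : Finset α, S ⊆ T → C S ≤ C T)
    (hsubadd : ∀ S T : Finset α, C (S ∪ T) ≤ C S + C T)
    (v : Fin n → Finset α → ℝ) (hv0 : ∀ i, v i ∅ = 0)
    (hvmono : ∀ i, ∀ S T : Finset α, S ⊆ T → T ⊆ M i → v i S ≤ v i T)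
    (hvnn : ∀ i S, 0 ≤ v i S)
    (ALG : Fin n → Finset α) (hALGsub : ∀ i, ALG i ⊆ M i)
    (hALGmax : ∀ S : Fin n → Finset α, (∀ i, S i ⊆ M i) →
      ∑ i, v i (S i) - potential n C S ≤ ∑ i, v i (ALG i) - potential n C ALG)
    (OPT : Fin n → Finset α) (hOPT : ∀ i, OPT i ⊆ M i) :
    C (univ.biUnion ALG) + ∑ i, (v i (M i) - v i (ALG i)) ≤
      2 * (∑ k ∈ Finset.range n, (1 : ℝ) / (k + 1)) *
        (C (univ.biUnion OPT) + ∑ i, (v i (M i) - v i (OPT i))) := by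
  rcases Nat.eq_zero_or_pos n with hn | hn
  · subst hn
    simp [hC0]
  -- Properties of the set functions I ↦ C(∪_{i ∈ I} X i)
  have hbi : ∀ (X : Fin n → Finset α) (I J : Finset (Fin n)),
      (I ∪ J).biUnion X = I.biUnion X ∪ J.biUnion X := by
    intro X I J
    ext a
    simp only [Finset.mem_biUnion, Finset.mem_union]
    constructor
    · rintro ⟨i, hi | hi, ha⟩
      · exact Or.inl ⟨i, hi, ha⟩
      · exact Or.inr ⟨i, hi, ha⟩
    · rintro (⟨i, hi, ha⟩ | ⟨i, hi, ha⟩)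
      · exact ⟨i, Or.inl hi, ha⟩
      · exact ⟨i, Or.inr hi, ha⟩
  have hfmono : ∀ (X : Fin n → Finset α) (I J : Finset (Fin n)), I ⊆ J →
      C (I.biUnion X) ≤ C (J.biUnion X) := fun X I J h =>
    hCmono _ _ (Finset.biUnion_subset_biUnion_of_subset_left X h)
  have hfsub : ∀ (X : Fin n → Finset α) (I J : Finset (Fin n)),
      C ((I ∪ J).biUnion X) ≤ C (I.biUnion X) + C (J.biUnion X) := by
    intro X I J
    rw [hbi X I J]
    exact hsubadd _ _
  have hfnn : ∀ (X : Fin n → Finset α) (I : Finset (Fin n)),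
      0 ≤ C (I.biUnion X) := fun X I => hCnn _
  have hf0 : ∀ (X : Fin n → Finset α), C ((∅ : Finset (Fin n)).biUnion X) = 0 := by
    intro X; rw [Finset.biUnion_empty]; exact hC0
  -- potential as a sum over cardinalities
  have hpot : ∀ X : Fin n → Finset α, potential n C X
      = ∑ i ∈ Finset.range n, aa (fun I => C (I.biUnion X)) (i + 1) / ((i : ℝ) + 1) := by
    intro X
    exact pot_eq (fun I => C (I.biUnion X)) (hf0 X)
  set H : ℝ := ∑ k ∈ Finset.range n, (1 : ℝ) / (k + 1) with hH
  have hH1 : (1 : ℝ) ≤ H := by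
    have h0 : (0 : ℕ) ∈ Finset.range n := Finset.mem_range.2 hn
    have h1 : (1 : ℝ) / ((0 : ℕ) + 1) ≤ H := by
      rw [hH]
      exact Finset.single_le_sum (f := fun k : ℕ => (1 : ℝ) / (k + 1))
        (fun k _ => by positivity) h0
    norm_num at h1
    exact h1
  -- the two potential bounds
  have hlowA : C (univ.biUnion ALG) ≤ 2 * potential n C ALG := by
    rw [hpot ALG]
    exact pot_lower (hfmono ALG) (hfsub ALG) (hfnn ALG) hn
  have hupO : potential n C OPT ≤ H * C (univ.biUnion OPT) := by
    rw [hpot OPT, hH]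
    exact pot_upper (hfmono OPT)
  have hmax := hALGmax OPT hOPT
  have hDA : 0 ≤ ∑ i, (v i (M i) - v i (ALG i)) :=
    Finset.sum_nonneg fun i _ => sub_nonneg.2 (hvmono i _ _ (hALGsub i) subset_rfl)
  have hDO : 0 ≤ ∑ i, (v i (M i) - v i (OPT i)) :=
    Finset.sum_nonneg fun i _ => sub_nonneg.2 (hvmono i _ _ (hOPT i) subset_rfl)
  have hDAeq : ∑ i, (v i (M i) - v i (ALG i)) = ∑ i, v i (M i) - ∑ i, v i (ALG i) :=
    Finset.sum_sub_distrib _ _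
  have hDOeq : ∑ i, (v i (M i) - v i (OPT i)) = ∑ i, v i (M i) - ∑ i, v i (OPT i) :=
    Finset.sum_sub_distrib _ _
  have hCO : 0 ≤ C (univ.biUnion OPT) := hCnn _
  have hHD : ∑ i, (v i (M i) - v i (OPT i)) ≤ H * ∑ i, (v i (M i) - v i (OPT i)) :=
    le_mul_of_one_le_left hDO hH1
  have hring : 2 * H * (C (univ.biUnion OPT) + ∑ i, (v i (M i) - v i (OPT i)))
      = 2 * (H * C (univ.biUnion OPT)) + 2 * (H * ∑ i, (v i (M i) - v i (OPT i))) := by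
    ring
  linarith [hlowA, hupO, hmax, hDA, hDO, hDAeq, hDOeq, hCO, hHD, hring]
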